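/- Given integers m, ν with ν ≥ 2 and such that m has at least ν - 1 prime factors counted with multiplicity, there exists a numerical semigroup S with multiplicity m, embedding dimension ν, and α-rectangular Apéry set. -/
import Mathlib


/-- A numerical semigroup: a subset of ℕ containing 0, closed under addition,
with finite complement. -/
structure NumSgp where
  carrier : Set ℕ
  zero_mem : 0 ∈ carrier
  add_mem : ∀ a ∈ carrier, ∀ b ∈ carrier, a + b ∈ carrier
  cofinite : Set.Finite carrierᶜ

namespace NumSgp

/-- The multiplicity: the smallest positive element. -/
noncomputable def mult (S : NumSgp) : ℕ := sInf {s | s ∈ S.carrier ∧ s ≠ 0}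

/-- The Apéry set of `S` with respect to `n`: elements `s ∈ S` with `s - n ∉ S`. -/
def Apery (S : NumSgp) (n : ℕ) : Set ℕ :=
  {s | s ∈ S.carrier ∧ ¬ ∃ t ∈ S.carrier, s = t + n}

/-- `s ⪯ t` : there is `u ∈ S` with `t = s + u`. -/
def sle (S : NumSgp) (s t : ℕ) : Prop := ∃ u ∈ S.carrier, t = s + u

/-- Membership for integers. -/
def memZ (S : NumSgp) (x : ℤ) : Prop := ∃ n ∈ S.carrier, (n : ℤ) = x

/-- `f` is the Frobenius number of `S`: the largest integer not in `S`. -/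
def IsFrob (S : NumSgp) (f : ℤ) : Prop := ¬ S.memZ f ∧ ∀ x : ℤ, f < x → S.memZ x

/-- `S` is symmetric: `x ∈ S ↔ f - x ∉ S` for all integers `x`. -/
def Symm (S : NumSgp) : Prop :=
  ∃ f : ℤ, S.IsFrob f ∧ ∀ x : ℤ, S.memZ x ↔ ¬ S.memZ (f - x)

/-- `s` is a minimal generator (irreducible element) of `S`. -/
def IsMinGen (S : NumSgp) (s : ℕ) : Prop :=
  s ∈ S.carrier ∧ s ≠ 0 ∧
    ¬ ∃ a ∈ S.carrier, ∃ b ∈ S.carrier, a ≠ 0 ∧ b ≠ 0 ∧ s = a + b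

/-- `g : Fin ν → ℕ` enumerates the minimal generators in increasing order. -/
def MinGens (S : NumSgp) {ν : ℕ} (g : Fin ν → ℕ) : Prop :=
  StrictMono g ∧ Set.range g = {s | S.IsMinGen s}

/-- The order of `s`: the maximal total coefficient sum over representations of `s`
in terms of the generators `g`. -/
noncomputable def ord {ν : ℕ} (g : Fin ν → ℕ) (s : ℕ) : ℕ :=
  sSup {k | ∃ lam : Fin ν → ℕ, s = ∑ i, lam i * g i ∧ k = ∑ i, lam i}

/-- `s` has a unique representation in terms of the generators `g`. -/
def UniqueRep {ν : ℕ} (g : Fin ν → ℕ) (s : ℕ) : Prop :=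
  ∃! lam : Fin ν → ℕ, s = ∑ i, lam i * g i

/-- `s` has a unique maximal representation in terms of the generators `g`. -/
def UniqueMaxRep {ν : ℕ} (g : Fin ν → ℕ) (s : ℕ) : Prop :=
  ∃! lam : Fin ν → ℕ, s = ∑ i, lam i * g i ∧ ∑ i, lam i = ord g s

/-- The submonoid of ℕ generated by the generators `g j` with `j < i`. -/
def genBy {ν : ℕ} (g : Fin ν → ℕ) (i : Fin ν) : Set ℕ :=
  {s | ∃ lam : Fin ν → ℕ, (∀ j, ¬ j < i → lam j = 0) ∧ s = ∑ j, lam j * g j}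

/-- `τ_i = min {h | h·g_i ∈ ⟨g_1, …, g_{i-1}⟩} - 1`. -/
noncomputable def tau {ν : ℕ} (g : Fin ν → ℕ) (i : Fin ν) : ℕ :=
  sInf {h | h * g i ∈ genBy g i} - 1

/-- `α_i = max {h | h·g_i ∈ Ap(S, m)}`. -/
noncomputable def alpha (S : NumSgp) {ν : ℕ} (g : Fin ν → ℕ) (i : Fin ν) : ℕ :=
  sSup {h | h * g i ∈ S.Apery S.mult}

/-- `β_i = max {h | h·g_i ∈ Ap(S, m) and ord(h·g_i) = h}`. -/
noncomputable def beta (S : NumSgp) {ν : ℕ} (g : Fin ν → ℕ) (i : Fin ν) : ℕ :=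
  sSup {h | h * g i ∈ S.Apery S.mult ∧ ord g (h * g i) = h}

/-- `γ_i`. -/
noncomputable def gamma (S : NumSgp) {ν : ℕ} (g : Fin ν → ℕ) (i : Fin ν) : ℕ :=
  sSup {h | h * g i ∈ S.Apery S.mult ∧ ord g (h * g i) = h ∧ UniqueMaxRep g (h * g i)}

/-- The "rectangle" `{Σ_{i ≥ 2} λ_i g_i | 0 ≤ λ_i ≤ c_i}` (indices here start at 0,
the first generator does not appear). -/
def rect {ν : ℕ} (g c : Fin ν → ℕ) : Set ℕ :=
  {s | ∃ lam : Fin ν → ℕ, (∀ i, i.val = 0 → lam i = 0) ∧ (∀ i, lam i ≤ c i) ∧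
    s = ∑ i, lam i * g i}

/-- `Π_{i ≥ 2} (c_i + 1)` (the first index excluded). -/
def piProd {ν : ℕ} (c : Fin ν → ℕ) : ℕ :=
  ∏ i ∈ Finset.univ.filter (fun i : Fin ν => i.val ≠ 0), (c i + 1)

/-- `S` is telescopic. -/
def Telescopic (S : NumSgp) : Prop :=
  ∃ (ν : ℕ) (g : Fin ν → ℕ), S.MinGens g ∧ S.Apery S.mult = rect g (tau g)

/-- `S` has α-rectangular Apéry set. -/
def AlphaRect (S : NumSgp) : Prop :=
  ∃ (ν : ℕ) (g : Fin ν → ℕ), S.MinGens g ∧ S.Apery S.mult = rect g (S.alpha g)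

/-- `S` has γ-rectangular Apéry set. -/
def GammaRect (S : NumSgp) : Prop :=
  ∃ (ν : ℕ) (g : Fin ν → ℕ), S.MinGens g ∧ S.Apery S.mult = rect g (S.gamma g)

/-- `S` is associated to a plane branch: telescopic and `(τ_i+1) g_i < g_{i+1}`. -/
def PlaneBranch (S : NumSgp) : Prop :=
  ∃ (ν : ℕ) (g : Fin ν → ℕ), S.MinGens g ∧ S.Apery S.mult = rect g (tau g) ∧
    ∀ i : Fin ν, 1 ≤ i.val → ∀ h : i.val + 1 < ν, (tau g i + 1) * g i < g ⟨i.val + 1, h⟩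

/-- `S` is free: for some rearrangement `n` of the minimal generators,
`Ap(S, n_1) = {Σ_{i ≥ 2} λ_i n_i | 0 ≤ λ_i ≤ φ_i}`. -/
def Free (S : NumSgp) : Prop :=
  ∃ (ν : ℕ) (hν : 0 < ν) (n : Fin ν → ℕ), Function.Injective n ∧
    Set.range n = {s | S.IsMinGen s} ∧ S.Apery (n ⟨0, hν⟩) = rect n (tau n)

/-- The kernel congruence of the factorization map `λ ↦ Σ λ_i g_i`. -/
def kerCon {ν : ℕ} (g : Fin ν → ℕ) : AddCon (Fin ν → ℕ) where
  r a b := ∑ i, a i * g i = ∑ i, b i * g i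
  iseqv := ⟨fun _ => rfl, Eq.symm, Eq.trans⟩
  add' := by
    intro a b c d h1 h2
    simp only [Pi.add_apply, add_mul, Finset.sum_add_distrib]
    exact congrArg₂ (· + ·) h1 h2

/-- `S` is a complete intersection: it admits a presentation of cardinality `ν - 1`
(the cardinality of any minimal presentation equals `ν - 1`). -/
def CompleteIntersection (S : NumSgp) : Prop :=
  ∃ (ν : ℕ) (g : Fin ν → ℕ), S.MinGens g ∧
    ∃ ρ : Finset ((Fin ν → ℕ) × (Fin ν → ℕ)), ρ.card = ν - 1 ∧
      addConGen (fun a b => (a, b) ∈ ρ) = kerCon g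

end NumSgp

open NumSgp

namespace Stmt18


lemma exists_factors (ν : ℕ) (hν : 2 ≤ ν) :
    ∀ m : ℕ, ν - 1 ≤ m.primeFactorsList.length →
    ∃ B : ℕ → ℕ, (∀ j, 1 ≤ j → j < ν → 2 ≤ B j) ∧ ∏ j ∈ Finset.Ico 1 ν, B j = m := by
  induction ν, hν using Nat.le_induction with
  | base =>
    intro m hm
    have hm2 : 2 ≤ m := by
      by_contra h
      interval_cases m <;> simp_all
    refine ⟨fun _ => m, fun j h1 h2 => hm2, by simp⟩
  | succ ν hν ih =>
    intro m hm
    have hne : m.primeFactorsList ≠ [] := by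
      intro h; rw [h] at hm; simp at hm; omega
    obtain ⟨p, hp⟩ := List.exists_mem_of_ne_nil _ hne
    have hpp : p.Prime := Nat.prime_of_mem_primeFactorsList hp
    have hpd : p ∣ m := Nat.dvd_of_mem_primeFactorsList hp
    have hm0 : m ≠ 0 := by
      intro h; rw [h] at hm; simp at hm; omega
    have hq0 : m / p ≠ 0 := by
      intro h
      have := Nat.div_mul_cancel hpd
      rw [h] at this; simp at this; exact hm0 this.symm
    have hmul : m = p * (m / p) := (Nat.mul_div_cancel' hpd).symm
    have hlen : m.primeFactorsList.length = 1 + (m / p).primeFactorsList.length := by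
      have := Nat.perm_primeFactorsList_mul (a := p) (b := m / p) hpp.ne_zero hq0
      rw [← hmul] at this
      have := this.length_eq
      rw [this, List.length_append, Nat.primeFactorsList_prime hpp]
      simp
    obtain ⟨B, hB, hBprod⟩ := ih (m / p) (by omega)
    refine ⟨Function.update B ν p, ?_, ?_⟩
    · intro j h1 h2
      rcases eq_or_ne j ν with rfl | hj
      · simpa using hpp.two_le
      · rw [Function.update_of_ne hj]; exact hB j h1 (by omega)
    · rw [Finset.prod_Ico_succ_top (by omega), Function.update_self]
      rw [Finset.prod_congr rfl (fun j hj => ?_), hBprod]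
      · exact Nat.div_mul_cancel hpd
      · rw [Function.update_of_ne]; exact fun h => by simp at hj; omega



def rr (B : ℕ → ℕ) (k : ℕ) : ℕ := ∏ j ∈ Finset.Ico 1 k, B j

variable {ν : ℕ} {B : ℕ → ℕ}

lemma rr_one : rr B 1 = 1 := by simp [rr]

lemma rr_succ {k : ℕ} (hk : 1 ≤ k) : rr B (k + 1) = rr B k * B k :=
  Finset.prod_Ico_succ_top hk _

section
variable (hB : ∀ j, 1 ≤ j → j < ν → 2 ≤ B j)
include hB

lemma rr_pos {k : ℕ} (hk : k ≤ ν) : 0 < rr B k := by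
  apply Finset.prod_pos
  intro j hj
  rw [Finset.mem_Ico] at hj
  have := hB j hj.1 (by omega)
  omega

lemma rr_lt {a b : ℕ} (ha : 1 ≤ a) (hab : a < b) (hb : b ≤ ν) : rr B a < rr B b := by
  induction b, hab using Nat.le_induction with
  | base =>
    rw [rr_succ ha]
    have h2 : 2 ≤ B a := hB a ha (by omega)
    have h1 : 0 < rr B a := rr_pos hB (by omega)
    nlinarith
  | succ b hab ih =>
    have h1 : rr B a < rr B b := ih (by omega)
    rw [rr_succ (by omega)]
    have h2 : 2 ≤ B b := hB b (by omega) (by omega)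
    have h3 : 0 < rr B b := rr_pos hB (by omega)
    nlinarith

lemma tel : ∀ {k : ℕ}, k ≤ ν → ∑ j ∈ Finset.Ico 1 k, (B j - 1) * rr B j = rr B k - 1 := by
  intro k
  induction k with
  | zero => intro _; simp [rr]
  | succ k ih =>
    intro hk
    rcases Nat.eq_zero_or_pos k with rfl | hk1
    · simp [rr_one]
    · rw [Finset.sum_Ico_succ_top hk1, ih (by omega), rr_succ hk1, Nat.sub_mul]
      have h1 : 0 < rr B k := rr_pos hB (by omega)
      have h2 : 2 ≤ B k := hB k hk1 (by omega)
      have h3 : rr B k * 2 ≤ rr B k * B k := Nat.mul_le_mul_left _ h2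
      have h4 : B k * rr B k = rr B k * B k := mul_comm _ _
      have h5 : 1 * rr B k = rr B k := one_mul _
      omega
end

lemma sum_update {ι : Type*} [DecidableEq ι] (s : Finset ι) (f w : ι → ℕ) (a : ι) (b : ℕ)
    (ha : a ∈ s) :
    (∑ k ∈ s, Function.update f a b k * w k) + f a * w a
      = (∑ k ∈ s, f k * w k) + b * w a := by
  rw [← Finset.add_sum_erase s (fun k => Function.update f a b k * w k) ha,
      ← Finset.add_sum_erase s (fun k => f k * w k) ha]
  simp only [Function.update_self]
  have : ∑ k ∈ s.erase a, Function.update f a b k * w k = ∑ k ∈ s.erase a, f k * w k :=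
    Finset.sum_congr rfl fun k hk => by
      rw [Function.update_of_ne (Finset.ne_of_mem_erase hk)]
  omega


section
variable (hν : 2 ≤ ν) (hB : ∀ j, 1 ≤ j → j < ν → 2 ≤ B j)
include hν hB

lemma reduce : ∀ (n : ℕ) (lam : ℕ → ℕ), (∑ k ∈ Finset.Ico 1 ν, lam k) = n →
    ∃ (t : ℕ) (mu : ℕ → ℕ), (∀ k, 1 ≤ k → k < ν → mu k ≤ B k - 1) ∧
      t * rr B ν + ∑ k ∈ Finset.Ico 1 ν, mu k * rr B k = ∑ k ∈ Finset.Ico 1 ν, lam k * rr B k ∧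
      t + ∑ k ∈ Finset.Ico 1 ν, mu k ≤ ∑ k ∈ Finset.Ico 1 ν, lam k := by
  intro n
  induction n using Nat.strong_induction_on with
  | _ n ih =>
    intro lam hlam
    by_cases hbox : ∀ k ∈ Finset.Ico 1 ν, lam k ≤ B k - 1
    · exact ⟨0, lam, fun k h1 h2 => hbox k (Finset.mem_Ico.2 ⟨h1, h2⟩), by simp, by simp⟩
    · push_neg at hbox
      obtain ⟨k0, hk0mem, hk0⟩ := hbox
      obtain ⟨hk01, hk0ν⟩ := Finset.mem_Ico.1 hk0mem
      have hBk0 : 2 ≤ B k0 := hB k0 hk01 hk0ν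
      have hlamk0 : B k0 ≤ lam k0 := by omega
      have hZX : B k0 * rr B k0 ≤ lam k0 * rr B k0 := Nat.mul_le_mul_right _ hlamk0
      have hsub : (lam k0 - B k0) * rr B k0 = lam k0 * rr B k0 - B k0 * rr B k0 :=
        Nat.sub_mul _ _ _
      have e1 := sum_update (Finset.Ico 1 ν) lam (rr B) k0 (lam k0 - B k0) hk0mem
      have e1' := sum_update (Finset.Ico 1 ν) lam (fun _ => 1) k0 (lam k0 - B k0) hk0mem
      simp only [mul_one] at e1'
      set f1 : ℕ → ℕ := Function.update lam k0 (lam k0 - B k0) with hf1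
      by_cases htop : k0 + 1 < ν
      · have hmem1 : k0 + 1 ∈ Finset.Ico 1 ν := Finset.mem_Ico.2 ⟨by omega, htop⟩
        have e2 := sum_update (Finset.Ico 1 ν) f1 (rr B) (k0 + 1) (f1 (k0 + 1) + 1) hmem1
        have e2' := sum_update (Finset.Ico 1 ν) f1 (fun _ => 1) (k0 + 1) (f1 (k0 + 1) + 1) hmem1
        simp only [mul_one] at e2'
        set lam' : ℕ → ℕ := Function.update f1 (k0 + 1) (f1 (k0 + 1) + 1) with hlam'
        have hrs : rr B (k0 + 1) = rr B k0 * B k0 := rr_succ hk01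
        have hcm : rr B k0 * B k0 = B k0 * rr B k0 := mul_comm _ _
        -- value preserved
        have hVeq : ∑ k ∈ Finset.Ico 1 ν, lam' k * rr B k
            = ∑ k ∈ Finset.Ico 1 ν, lam k * rr B k := by
          have hadd : (f1 (k0 + 1) + 1) * rr B (k0 + 1)
              = f1 (k0 + 1) * rr B (k0 + 1) + rr B (k0 + 1) := by ring
          omega
        have hTlt : ∑ k ∈ Finset.Ico 1 ν, lam' k < n := by omega
        obtain ⟨t, mu, hmu, hV, hT⟩ := ih _ hTlt lam' rfl
        exact ⟨t, mu, hmu, by omega, by omega⟩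
      · have hk0top : k0 + 1 = ν := by omega
        have hrs : rr B ν = rr B k0 * B k0 := by rw [← hk0top]; exact rr_succ hk01
        have hXle : lam k0 * rr B k0 ≤ ∑ k ∈ Finset.Ico 1 ν, lam k * rr B k :=
          Finset.single_le_sum (f := fun k => lam k * rr B k) (fun k _ => Nat.zero_le _) hk0mem
        have hTlt : ∑ k ∈ Finset.Ico 1 ν, f1 k < n := by omega
        obtain ⟨t, mu, hmu, hV, hT⟩ := ih _ hTlt f1 rfl
        refine ⟨t + 1, mu, hmu, ?_, by omega⟩
        have : (t + 1) * rr B ν = t * rr B ν + rr B ν := by ring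
        have hcm : rr B k0 * B k0 = B k0 * rr B k0 := mul_comm _ _
        omega

lemma digit (mu : ℕ → ℕ) (hmu : ∀ k, 1 ≤ k → k < ν → mu k ≤ B k - 1) {i : ℕ}
    (hi1 : 1 ≤ i) (hiν : i < ν) :
    mu i = ((∑ k ∈ Finset.Ico 1 ν, mu k * rr B k) / rr B i) % B i := by
  have hsplit1 : (∑ k ∈ Finset.Ico 1 i, mu k * rr B k)
      + ∑ k ∈ Finset.Ico i ν, mu k * rr B k = ∑ k ∈ Finset.Ico 1 ν, mu k * rr B k :=
    Finset.sum_Ico_consecutive _ hi1 (by omega)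
  have hsplit2 : ∑ k ∈ Finset.Ico i ν, mu k * rr B k
      = mu i * rr B i + ∑ k ∈ Finset.Ico (i+1) ν, mu k * rr B k :=
    Finset.sum_eq_sum_Ico_succ_bot hiν _
  -- A bound
  have hA : (∑ k ∈ Finset.Ico 1 i, mu k * rr B k) ≤ rr B i - 1 := by
    calc (∑ k ∈ Finset.Ico 1 i, mu k * rr B k)
        ≤ ∑ k ∈ Finset.Ico 1 i, (B k - 1) * rr B k := by
          apply Finset.sum_le_sum
          intro k hk
          rw [Finset.mem_Ico] at hk
          exact Nat.mul_le_mul_right _ (hmu k hk.1 (by omega))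
      _ = rr B i - 1 := tel hB (by omega)
  have hipos : 0 < rr B i := rr_pos hB (by omega)
  have hA' : (∑ k ∈ Finset.Ico 1 i, mu k * rr B k) < rr B i := by omega
  -- divisibility of tail
  have hdvd : rr B (i+1) ∣ ∑ k ∈ Finset.Ico (i+1) ν, mu k * rr B k := by
    apply Finset.dvd_sum
    intro k hk
    rw [Finset.mem_Ico] at hk
    have : rr B (i+1) ∣ rr B k := by
      refine ⟨∏ j ∈ Finset.Ico (i+1) k, B j, ?_⟩
      exact (Finset.prod_Ico_consecutive _ (by omega) hk.1).symm
    exact Dvd.dvd.mul_left this _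
  obtain ⟨q, hq⟩ := hdvd
  have hrs : rr B (i+1) = rr B i * B i := rr_succ hi1
  have hBi : 2 ≤ B i := hB i hi1 hiν
  have hmui : mu i ≤ B i - 1 := hmu i hi1 hiν
  have htot : ∑ k ∈ Finset.Ico 1 ν, mu k * rr B k
      = (∑ k ∈ Finset.Ico 1 i, mu k * rr B k) + rr B i * (mu i + B i * q) := by
    rw [← hsplit1, hsplit2, hq, hrs]; ring
  rw [htot, Nat.add_mul_div_left _ _ hipos, Nat.div_eq_of_lt hA', zero_add,
    Nat.add_mul_mod_self_left, Nat.mod_eq_of_lt (by omega)]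

lemma digits_sum_eq (mu mu' : ℕ → ℕ) (hmu : ∀ k, 1 ≤ k → k < ν → mu k ≤ B k - 1)
    (hmu' : ∀ k, 1 ≤ k → k < ν → mu' k ≤ B k - 1)
    (hV : ∑ k ∈ Finset.Ico 1 ν, mu k * rr B k = ∑ k ∈ Finset.Ico 1 ν, mu' k * rr B k) :
    ∑ k ∈ Finset.Ico 1 ν, mu k = ∑ k ∈ Finset.Ico 1 ν, mu' k := by
  apply Finset.sum_congr rfl
  intro k hk
  rw [Finset.mem_Ico] at hk
  rw [digit hν hB mu hmu hk.1 hk.2, digit hν hB mu' hmu' hk.1 hk.2, hV]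

lemma V_lt (mu : ℕ → ℕ) (hmu : ∀ k, 1 ≤ k → k < ν → mu k ≤ B k - 1) :
    ∑ k ∈ Finset.Ico 1 ν, mu k * rr B k < rr B ν := by
  have h1 : ∑ k ∈ Finset.Ico 1 ν, mu k * rr B k ≤ ∑ k ∈ Finset.Ico 1 ν, (B k - 1) * rr B k := by
    apply Finset.sum_le_sum
    intro k hk
    rw [Finset.mem_Ico] at hk
    exact Nat.mul_le_mul_right _ (hmu k hk.1 hk.2)
  have h2 := tel hB (le_refl ν)
  have h3 : 0 < rr B ν := rr_pos hB (le_refl ν)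
  omega

end




variable (ν : ℕ) (B : ℕ → ℕ)

def gg : Fin ν → ℕ := fun i => if i.val = 0 then rr B ν else rr B ν + rr B i.val
def cc : Fin ν → ℕ := fun i => if i.val = 0 then 0 else B i.val - 1
def Sc : Set ℕ := {s | ∃ lam : Fin ν → ℕ, s = ∑ i, lam i * gg ν B i}
def NF {ν : ℕ} (lam : Fin ν → ℕ) : ℕ → ℕ := fun k => if h : k < ν then lam ⟨k, h⟩ else 0

variable {ν B}

lemma sumG (hν : 1 ≤ ν) (lam : Fin ν → ℕ) :
    ∑ i, lam i * gg ν B i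
      = (NF lam 0 + ∑ k ∈ Finset.Ico 1 ν, NF lam k) * rr B ν
        + ∑ k ∈ Finset.Ico 1 ν, NF lam k * rr B k := by
  have h0 : ∑ i : Fin ν, lam i * gg ν B i
      = ∑ k ∈ Finset.range ν, NF lam k * (if k = 0 then rr B ν else rr B ν + rr B k) := by
    rw [← Fin.sum_univ_eq_sum_range
      (fun k => NF lam k * (if k = 0 then rr B ν else rr B ν + rr B k)) ν]
    apply Finset.sum_congr rfl
    intro i _
    have h1 : NF lam i.val = lam i := by simp [NF, i.isLt]
    rw [h1]; rfl
  rw [h0, Finset.range_eq_Ico, Finset.sum_eq_sum_Ico_succ_bot (by omega : 0 < ν)]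
  rw [if_pos rfl]
  have h1 : ∑ k ∈ Finset.Ico 1 ν, NF lam k * (if k = 0 then rr B ν else rr B ν + rr B k)
      = ∑ k ∈ Finset.Ico 1 ν, (NF lam k * rr B ν + NF lam k * rr B k) := by
    apply Finset.sum_congr rfl
    intro k hk
    rw [Finset.mem_Ico] at hk
    rw [if_neg (by omega)]; ring
  rw [h1, Finset.sum_add_distrib, ← Finset.sum_mul]
  ring


section
variable {ν : ℕ} {B : ℕ → ℕ}

lemma single_sum (i : Fin ν) (a : ℕ) (w : Fin ν → ℕ) :
    ∑ j, (if j = i then a else 0) * w j = a * w i := by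
  rw [Finset.sum_eq_single i]
  · rw [if_pos rfl]
  · intro j _ hj; rw [if_neg hj, zero_mul]
  · intro h; exact absurd (Finset.mem_univ i) h

lemma mul_gen_mem (a : ℕ) (i : Fin ν) : a * gg ν B i ∈ Sc ν B :=
  ⟨fun j => if j = i then a else 0, (single_sum i a _).symm⟩

lemma addSc {x y : ℕ} (hx : x ∈ Sc ν B) (hy : y ∈ Sc ν B) : x + y ∈ Sc ν B := by
  obtain ⟨lam, rfl⟩ := hx
  obtain ⟨mu, rfl⟩ := hy
  exact ⟨lam + mu, by simp [add_mul, Finset.sum_add_distrib]⟩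

lemma zeroSc : (0 : ℕ) ∈ Sc ν B := ⟨0, by simp⟩

section
variable (hν : 2 ≤ ν) (hB : ∀ j, 1 ≤ j → j < ν → 2 ≤ B j)
include hν hB

lemma NF_box (lam : Fin ν → ℕ) (hlam : ∀ i, lam i ≤ cc ν B i) :
    ∀ k, 1 ≤ k → k < ν → NF lam k ≤ B k - 1 := by
  intro k h1 h2
  have h3 := hlam ⟨k, h2⟩
  simp only [NF, h2, dif_pos]
  simp only [cc] at h3
  rwa [if_neg (show ¬ ((⟨k, h2⟩ : Fin ν) : ℕ) = 0 by simp; omega)] at h3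

omit hν hB in
lemma NF_zero (lam : Fin ν → ℕ) (hlam : ∀ i : Fin ν, i.val = 0 → lam i = 0) (hν : 1 ≤ ν) :
    NF lam 0 = 0 := by
  simp only [NF, dif_pos (by omega : 0 < ν)]
  exact hlam _ rfl

omit hν hB in
lemma ggz (h0 : (0 : ℕ) < ν) : gg ν B ⟨0, h0⟩ = rr B ν := by simp [gg]

/-- every element of `Sc` decomposes as a multiple of `m` plus a box element -/
lemma mem_decomp {s : ℕ} (hs : s ∈ Sc ν B) :
    ∃ (a : ℕ) (mu : Fin ν → ℕ), (∀ i : Fin ν, i.val = 0 → mu i = 0) ∧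
      (∀ i, mu i ≤ cc ν B i) ∧ s = a * rr B ν + ∑ i, mu i * gg ν B i := by
  obtain ⟨lam, rfl⟩ := hs
  set L := NF lam with hL
  obtain ⟨t, mu, hmubox, hV, hT⟩ := reduce hν hB (∑ k ∈ Finset.Ico 1 ν, L k) L rfl
  set muF : Fin ν → ℕ := fun i => if i.val = 0 then 0 else mu i.val with hmuF
  have hNF : ∀ k ∈ Finset.Ico 1 ν, NF muF k = mu k := by
    intro k hk
    rw [Finset.mem_Ico] at hk
    simp only [NF, muF, dif_pos hk.2]
    rw [if_neg (by omega)]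
  have hTeq : ∑ k ∈ Finset.Ico 1 ν, NF muF k = ∑ k ∈ Finset.Ico 1 ν, mu k :=
    Finset.sum_congr rfl hNF
  have hVeq : ∑ k ∈ Finset.Ico 1 ν, NF muF k * rr B k
      = ∑ k ∈ Finset.Ico 1 ν, mu k * rr B k :=
    Finset.sum_congr rfl fun k hk => by rw [hNF k hk]
  have hNF0 : NF muF 0 = 0 := by
    have h0 : (0:ℕ) < ν := by omega
    simp only [NF, dif_pos h0, muF]
    simp
  refine ⟨L 0 + (∑ k ∈ Finset.Ico 1 ν, L k) + t - (∑ k ∈ Finset.Ico 1 ν, mu k),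
    muF, fun i hi => by simp [muF, hi], ?_, ?_⟩
  · intro i
    rcases Nat.eq_zero_or_pos i.val with h | h
    · simp [muF, h, cc]
    · simp only [muF, cc, if_neg (by omega : ¬ i.val = 0)]
      exact hmubox i.val h i.isLt
  · rw [sumG (by omega) lam, sumG (by omega) muF, hTeq, hVeq, hNF0, ← hL]
    set a := L 0 + (∑ k ∈ Finset.Ico 1 ν, L k) + t - (∑ k ∈ Finset.Ico 1 ν, mu k) with ha
    have haa : a + (∑ k ∈ Finset.Ico 1 ν, mu k)
        = L 0 + (∑ k ∈ Finset.Ico 1 ν, L k) + t := by omega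
    calc (L 0 + ∑ k ∈ Finset.Ico 1 ν, L k) * rr B ν + ∑ k ∈ Finset.Ico 1 ν, L k * rr B k
        = (L 0 + ∑ k ∈ Finset.Ico 1 ν, L k) * rr B ν
            + (t * rr B ν + ∑ k ∈ Finset.Ico 1 ν, mu k * rr B k) := by rw [hV]
      _ = (L 0 + (∑ k ∈ Finset.Ico 1 ν, L k) + t) * rr B ν
            + ∑ k ∈ Finset.Ico 1 ν, mu k * rr B k := by ring
      _ = (a + (∑ k ∈ Finset.Ico 1 ν, mu k)) * rr B ν
            + ∑ k ∈ Finset.Ico 1 ν, mu k * rr B k := by rw [haa]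
      _ = a * rr B ν + ((0 + ∑ k ∈ Finset.Ico 1 ν, mu k) * rr B ν
            + ∑ k ∈ Finset.Ico 1 ν, mu k * rr B k) := by ring

omit hν hB in
lemma divmod_unique {a a' v v' M : ℕ} (hv : v < M) (hv' : v' < M)
    (h : a * M + v = a' * M + v') : a = a' ∧ v = v' := by
  have h' : v + M * a = v' + M * a' := by
    rw [mul_comm M a, mul_comm M a']; omega
  have hvv : v = v' := by
    have := congrArg (· % M) h'
    simpa [Nat.add_mul_mod_self_left, Nat.mod_eq_of_lt hv, Nat.mod_eq_of_lt hv'] using this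
  constructor
  · have hM : 0 < M := by omega
    have : M * a = M * a' := by omega
    exact Nat.eq_of_mul_eq_mul_left hM this
  · exact hvv

/-- the Apéry set is the rectangle -/
lemma apery_eq :
    {s | s ∈ Sc ν B ∧ ¬ ∃ t ∈ Sc ν B, s = t + rr B ν}
      = {s | ∃ lam : Fin ν → ℕ, (∀ i : Fin ν, i.val = 0 → lam i = 0) ∧
          (∀ i, lam i ≤ cc ν B i) ∧ s = ∑ i, lam i * gg ν B i} := by
  ext s
  constructor
  · rintro ⟨hs, hnot⟩
    obtain ⟨a, mu, hmu0, hmubd, hdec⟩ := mem_decomp hν hB hs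
    rcases Nat.eq_zero_or_pos a with rfl | ha
    · exact ⟨mu, hmu0, hmubd, by simpa using hdec⟩
    · exfalso
      apply hnot
      refine ⟨(a - 1) * rr B ν + ∑ i, mu i * gg ν B i, ?_, ?_⟩
      · have h1 : (a - 1) * rr B ν = (a - 1) * gg ν B ⟨0, by omega⟩ := by
          rw [ggz (show (0:ℕ) < ν by omega)]
        rw [h1]
        exact addSc (mul_gen_mem _ _) ⟨mu, rfl⟩
      · rw [hdec]
        have : a * rr B ν = (a - 1) * rr B ν + rr B ν := by
          rw [Nat.sub_mul]; have := Nat.le_mul_of_pos_left (rr B ν) ha; omega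
        omega
  · rintro ⟨lam, hlam0, hlambd, rfl⟩
    have hLbox := NF_box hν hB lam hlambd
    have hL0 := NF_zero lam hlam0 (by omega)
    refine ⟨⟨lam, rfl⟩, ?_⟩
    rintro ⟨t, ⟨lam', rfl⟩, heq⟩
    obtain ⟨t0, mu, hmubox, hV, hT⟩ :=
      reduce hν hB (∑ k ∈ Finset.Ico 1 ν, NF lam' k) (NF lam') rfl
    rw [sumG (by omega) lam, sumG (by omega) lam'] at heq
    rw [hL0, zero_add] at heq
    have heq2 : (∑ k ∈ Finset.Ico 1 ν, NF lam k) * rr B ν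
        + ∑ k ∈ Finset.Ico 1 ν, NF lam k * rr B k
        = (NF lam' 0 + (∑ k ∈ Finset.Ico 1 ν, NF lam' k) + t0 + 1) * rr B ν
        + ∑ k ∈ Finset.Ico 1 ν, mu k * rr B k := by
      rw [heq]; rw [← hV]; ring
    have hVlam := V_lt hν hB (NF lam) hLbox
    have hVmu := V_lt hν hB mu hmubox
    obtain ⟨hcoef, hval⟩ := divmod_unique hVlam hVmu heq2
    have hsum := digits_sum_eq hν hB (NF lam) mu hLbox hmubox hval
    omega

/-- lower bound for nonzero elements -/
lemma ge_of_exists (f : Fin ν → ℕ) (j : Fin ν) (hj : f j ≠ 0) :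
    rr B ν ≤ ∑ i, f i * gg ν B i := by
  have h1 : f j * gg ν B j ≤ ∑ i, f i * gg ν B i :=
    Finset.single_le_sum (f := fun i => f i * gg ν B i) (fun i _ => Nat.zero_le _)
      (Finset.mem_univ j)
  have h2 : rr B ν ≤ gg ν B j := by
    unfold gg; split <;> omega
  have h3 : gg ν B j ≤ f j * gg ν B j := Nat.le_mul_of_pos_left _ (by omega)
  omega

lemma mem_ge {s : ℕ} (hs : s ∈ Sc ν B) (h0 : s ≠ 0) : rr B ν ≤ s := by
  obtain ⟨lam, rfl⟩ := hs
  by_cases h : ∀ i, lam i = 0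
  · exfalso; apply h0; simp [h]
  · push_neg at h
    obtain ⟨j, hj⟩ := h
    exact ge_of_exists hν hB lam j hj

lemma rr_big : 2 ≤ rr B ν := by
  have h1 : rr B 1 < rr B ν := rr_lt hB (le_refl 1) (by omega) (le_refl ν)
  rw [rr_one] at h1
  omega

lemma gg_lt (i : Fin ν) : gg ν B i < 2 * rr B ν := by
  have h2 := rr_big hν hB
  unfold gg
  split
  · omega
  · rename_i h
    have : rr B i.val < rr B ν := rr_lt hB (by omega) (by omega) (le_refl ν)
    omega

lemma gg_strictmono : StrictMono (gg ν B) := by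
  intro i j hij
  unfold gg
  rcases Nat.eq_zero_or_pos i.val with h | h
  · rw [if_pos h, if_neg (by omega : ¬ j.val = 0)]
    have : 0 < rr B j.val := rr_pos hB (le_of_lt j.isLt)
    omega
  · rw [if_neg (by omega), if_neg (by omega : ¬ j.val = 0)]
    have : rr B i.val < rr B j.val := rr_lt hB h (by exact_mod_cast hij) (le_of_lt j.isLt)
    omega

end
end

section
variable {ν : ℕ} {B : ℕ → ℕ}

lemma gg_ge (i : Fin ν) : rr B ν ≤ gg ν B i := by
  unfold gg; split
  · exact le_refl _
  · exact Nat.le_add_right _ _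

variable (hν : 2 ≤ ν) (hB : ∀ j, 1 ≤ j → j < ν → 2 ≤ B j)
include hν hB

lemma Sc_cofinite : Set.Finite (Sc ν B)ᶜ := by
  apply Set.Finite.subset (Set.finite_Iio (rr B ν * rr B ν))
  intro n hn
  simp only [Set.mem_compl_iff] at hn
  rw [Set.mem_Iio]
  by_contra h
  push_neg at h
  apply hn
  have hM : 2 ≤ rr B ν := rr_big hν hB
  set M := rr B ν with hMdef
  set q := n / M with hq
  set s := n % M with hs
  have hdm : M * q + s = n := Nat.div_add_mod n M
  have hcm : M * q = q * M := mul_comm _ _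
  have hslt : s < M := Nat.mod_lt _ (by omega)
  have hqge : M ≤ q := (Nat.le_div_iff_mul_le (by omega)).mpr h
  have e0 : gg ν B ⟨0, by omega⟩ = M := ggz (show (0:ℕ) < ν by omega)
  have e1 : gg ν B ⟨1, by omega⟩ = M + 1 := by
    have : ¬ ((⟨1, by omega⟩ : Fin ν) : ℕ) = 0 := by simp
    unfold gg
    rw [if_neg this]
    have : rr B ((⟨1, by omega⟩ : Fin ν) : ℕ) = 1 := rr_one
    omega
  have hmem : (q - s) * gg ν B ⟨0, by omega⟩ + s * gg ν B ⟨1, by omega⟩ ∈ Sc ν B :=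
    addSc (mul_gen_mem _ _) (mul_gen_mem _ _)
  have harith : (q - s) * gg ν B ⟨0, by omega⟩ + s * gg ν B ⟨1, by omega⟩ = n := by
    rw [e0, e1]
    have h1 : (q - s) * M = q * M - s * M := Nat.sub_mul _ _ _
    have h2 : s * (M + 1) = s * M + s := by ring
    have h3 : s * M ≤ q * M := Nat.mul_le_mul_right _ (by omega)
    omega
  rwa [harith] at hmem

lemma rr_mem : rr B ν ∈ Sc ν B := by
  have h := mul_gen_mem (ν := ν) (B := B) 1 ⟨0, by omega⟩
  rwa [one_mul, ggz (show (0:ℕ) < ν by omega)] at h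

lemma mult_eq : sInf {s | s ∈ Sc ν B ∧ s ≠ 0} = rr B ν := by
  apply le_antisymm
  · exact Nat.sInf_le ⟨rr_mem hν hB, by have := rr_big hν hB; omega⟩
  · exact le_csInf ⟨rr B ν, rr_mem hν hB, by have := rr_big hν hB; omega⟩
      fun b hb => mem_ge hν hB hb.1 hb.2

lemma gen_not_sum (i : Fin ν) :
    ¬ ∃ a ∈ Sc ν B, ∃ b ∈ Sc ν B, a ≠ 0 ∧ b ≠ 0 ∧ gg ν B i = a + b := by
  rintro ⟨a, ha, b, hb, ha0, hb0, heq⟩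
  have h1 := mem_ge hν hB ha ha0
  have h2 := mem_ge hν hB hb hb0
  have h3 := gg_lt hν hB i
  omega

lemma gen_mem (i : Fin ν) : gg ν B i ∈ Sc ν B := by
  have h := mul_gen_mem (ν := ν) (B := B) 1 i
  rwa [one_mul] at h

lemma isMin_gen {s : ℕ} (hs : s ∈ Sc ν B) (h0 : s ≠ 0)
    (hmin : ¬ ∃ a ∈ Sc ν B, ∃ b ∈ Sc ν B, a ≠ 0 ∧ b ≠ 0 ∧ s = a + b) :
    ∃ i, gg ν B i = s := by
  obtain ⟨lam, rfl⟩ := hs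
  have hex : ∃ j, lam j ≠ 0 := by
    by_contra hall
    push_neg at hall
    exact h0 (by simp [hall])
  obtain ⟨j, hj⟩ := hex
  have hT1 : 1 ≤ ∑ i, lam i :=
    le_trans (by omega) (Finset.single_le_sum (f := lam) (fun i _ => Nat.zero_le _)
      (Finset.mem_univ j))
  rcases Nat.lt_or_ge (∑ i, lam i) 2 with hT | hT
  · -- total equal to 1 : s is a generator
    have hTe : ∑ i, lam i = 1 := by omega
    have hsplit : lam j + ∑ k ∈ Finset.univ.erase j, lam k = 1 := by
      rw [Finset.add_sum_erase _ _ (Finset.mem_univ j)]; exact hTe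
    have hlamj : lam j = 1 := by
      have : ∑ k ∈ Finset.univ.erase j, lam k = 0 ∨ lam j = 1 := by omega
      omega
    have hzero : ∀ k ∈ Finset.univ.erase j, lam k = 0 := by
      intro k hk
      have hz : ∑ k ∈ Finset.univ.erase j, lam k = 0 := by omega
      exact (Finset.sum_eq_zero_iff).1 hz k hk
    refine ⟨j, ?_⟩
    rw [Finset.sum_eq_single j]
    · rw [hlamj, one_mul]
    · intro b _ hbj
      rw [hzero b (Finset.mem_erase.2 ⟨hbj, Finset.mem_univ b⟩), zero_mul]
    · intro hj'; exact absurd (Finset.mem_univ j) hj'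
  · -- total at least 2 : contradiction with minimality
    exfalso
    apply hmin
    have e := sum_update Finset.univ lam (gg ν B) j (lam j - 1) (Finset.mem_univ j)
    have e' := sum_update Finset.univ lam (fun _ => 1) j (lam j - 1) (Finset.mem_univ j)
    simp only [mul_one] at e'
    set lam' := Function.update lam j (lam j - 1) with hlam'
    have hsub : (lam j - 1) * gg ν B j = lam j * gg ν B j - gg ν B j := by
      rw [Nat.sub_mul, one_mul]
    have hle : gg ν B j ≤ lam j * gg ν B j := Nat.le_mul_of_pos_left _ (by omega)
    have hbig := rr_big hν hB
    have hggj := gg_ge (B := B) j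
    have hT' : 1 ≤ ∑ k, lam' k := by omega
    obtain ⟨j', _, hj'⟩ := Finset.exists_ne_zero_of_sum_ne_zero (by omega :
      ∑ k, lam' k ≠ 0)
    have hbge : rr B ν ≤ ∑ k, lam' k * gg ν B k := ge_of_exists hν hB lam' j' hj'
    refine ⟨gg ν B j, gen_mem hν hB j, ∑ k, lam' k * gg ν B k, ⟨lam', rfl⟩,
      by omega, by omega, by omega⟩

-- the alpha computation -----------------------------------------------------

lemma mul_gen_in_rect {h : ℕ} {i : Fin ν} (hi : i.val ≠ 0) (hh : h ≤ B i.val - 1) :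
    h * gg ν B i ∈ {s | ∃ lam : Fin ν → ℕ, (∀ i : Fin ν, i.val = 0 → lam i = 0) ∧
      (∀ i, lam i ≤ cc ν B i) ∧ s = ∑ i, lam i * gg ν B i} := by
  refine ⟨fun j => if j = i then h else 0, ?_, ?_, (single_sum i h _).symm⟩
  · intro j hj
    show (if j = i then h else 0) = 0
    rw [if_neg]
    rintro rfl
    exact hi hj
  · intro j
    show (if j = i then h else 0) ≤ cc ν B j
    rcases eq_or_ne j i with rfl | hne
    · rw [if_pos rfl]
      simpa [cc, hi] using hh
    · rw [if_neg hne]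
      exact Nat.zero_le _

lemma mul_gen_not_ap {h : ℕ} {i : Fin ν} (hi : i.val ≠ 0) (hh : B i.val ≤ h) :
    ∃ t ∈ Sc ν B, h * gg ν B i = t + rr B ν := by
  set k := i.val with hk
  have hk1 : 1 ≤ k := by omega
  have hkν : k < ν := i.isLt
  have hBk : 2 ≤ B k := hB k hk1 hkν
  have hggi : gg ν B i = rr B ν + rr B k := by
    unfold gg; rw [if_neg hi]
  have hZ : B k * gg ν B i = B k * rr B ν + rr B (k + 1) := by
    rw [hggi, rr_succ hk1]; ring
  have hZle : B k * gg ν B i ≤ h * gg ν B i := Nat.mul_le_mul_right _ hh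
  have hsub : (h - B k) * gg ν B i = h * gg ν B i - B k * gg ν B i := Nat.sub_mul _ _ _
  have hBM : 2 * rr B ν ≤ B k * rr B ν := Nat.mul_le_mul_right _ hBk
  have hMg : rr B ν = gg ν B ⟨0, by omega⟩ := (ggz (show (0:ℕ) < ν by omega)).symm
  by_cases hkt : k + 1 < ν
  · refine ⟨(h - B k) * gg ν B i + ((B k - 2) * rr B ν + gg ν B ⟨k + 1, hkt⟩), ?_, ?_⟩
    · refine addSc (mul_gen_mem _ _) (addSc ?_ (gen_mem hν hB _))
      rw [hMg]; exact mul_gen_mem _ _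
    · have hgk1 : gg ν B ⟨k + 1, hkt⟩ = rr B ν + rr B (k + 1) := by
        unfold gg
        rw [if_neg (by simp)]
      have hsub2 : (B k - 2) * rr B ν = B k * rr B ν - 2 * rr B ν := Nat.sub_mul _ _ _
      omega
  · have hktop : k + 1 = ν := by omega
    refine ⟨(h - B k) * gg ν B i + B k * rr B ν, ?_, ?_⟩
    · refine addSc (mul_gen_mem _ _) ?_
      rw [hMg]; exact mul_gen_mem _ _
    · have hMeq : rr B (k + 1) = rr B ν := by rw [hktop]
      omega

end

end Stmt18

/-- Given `m, ν` with `ν ≥ 2` and `ℓ(m) ≥ ν - 1`, there is a numerical semigroup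
with multiplicity `m`, embedding dimension `ν` and α-rectangular Apéry set. -/
theorem stmt_18 (m ν : ℕ) (hν : 2 ≤ ν) (hm : ν - 1 ≤ m.primeFactorsList.length) :
    ∃ (S : NumSgp) (g : Fin ν → ℕ), S.MinGens g ∧ S.mult = m ∧
      S.Apery S.mult = rect g (S.alpha g) := by
  obtain ⟨B, hB, hBprod⟩ := Stmt18.exists_factors ν hν m hm
  have hmeq : Stmt18.rr B ν = m := hBprod
  set S : NumSgp :=
    { carrier := Stmt18.Sc ν B
      zero_mem := Stmt18.zeroSc
      add_mem := fun a ha b hb => Stmt18.addSc ha hb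
      cofinite := Stmt18.Sc_cofinite hν hB } with hS
  have hmult : S.mult = Stmt18.rr B ν := by
    show sInf {s | s ∈ S.carrier ∧ s ≠ 0} = _
    exact Stmt18.mult_eq hν hB
  have hap : S.Apery S.mult = {s | ∃ lam : Fin ν → ℕ,
      (∀ i : Fin ν, i.val = 0 → lam i = 0) ∧
      (∀ i, lam i ≤ Stmt18.cc ν B i) ∧ s = ∑ i, lam i * Stmt18.gg ν B i} := by
    rw [hmult]
    exact Stmt18.apery_eq hν hB
  refine ⟨S, Stmt18.gg ν B, ⟨Stmt18.gg_strictmono hν hB, ?_⟩, by rw [hmult, hmeq], ?_⟩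
  · ext s
    simp only [Set.mem_range, Set.mem_setOf_eq]
    constructor
    · rintro ⟨i, rfl⟩
      refine ⟨Stmt18.gen_mem hν hB i, ?_, Stmt18.gen_not_sum hν hB i⟩
      have h1 := Stmt18.gg_ge (B := B) i
      have h2 := Stmt18.rr_big hν hB
      omega
    · rintro ⟨h1, h2, h3⟩
      exact Stmt18.isMin_gen hν hB h1 h2 h3
  · rw [hap]
    have halpha : ∀ i : Fin ν, i.val ≠ 0 →
        S.alpha (Stmt18.gg ν B) i = Stmt18.cc ν B i := by
      intro i hi
      have hcci : Stmt18.cc ν B i = B i.val - 1 := by simp [Stmt18.cc, hi]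
      have hBi2 : 2 ≤ B i.val := hB i.val (by omega) i.isLt
      have hset : {h : ℕ | h * Stmt18.gg ν B i ∈ S.Apery S.mult}
          = Set.Iic (Stmt18.cc ν B i) := by
        ext h
        simp only [Set.mem_setOf_eq, Set.mem_Iic]
        constructor
        · intro hmem
          by_contra hgt
          push_neg at hgt
          have hBi : B i.val ≤ h := by omega
          obtain ⟨t, ht, heq⟩ := Stmt18.mul_gen_not_ap hν hB hi hBi
          rw [hmult] at hmem
          exact hmem.2 ⟨t, ht, heq⟩
        · intro hle
          rw [hap]
          exact Stmt18.mul_gen_in_rect hν hB hi (by omega)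
      show sSup {h : ℕ | h * Stmt18.gg ν B i ∈ S.Apery S.mult} = _
      rw [hset]
      exact csSup_Iic
    ext s
    simp only [Set.mem_setOf_eq, rect]
    constructor
    · rintro ⟨lam, hl0, hlb, rfl⟩
      refine ⟨lam, hl0, fun i => ?_, rfl⟩
      rcases eq_or_ne i.val 0 with h0 | h0
      · rw [hl0 i h0]; exact Nat.zero_le _
      · rw [halpha i h0]; exact hlb i
    · rintro ⟨lam, hl0, hlb, rfl⟩
      refine ⟨lam, hl0, fun i => ?_, rfl⟩
      rcases eq_or_ne i.val 0 with h0 | h0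
      · rw [hl0 i h0]; exact Nat.zero_le _
      · rw [← halpha i h0]; exact hlb i
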